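/- Let $a_1, \dots, a_m$ be distinct points in the open upper half-plane and let $\alpha_1, \dots, \alpha_m$ satisfy the transposed Vandermonde system $\sum_{j=1}^m \alpha_j a_j^k = \delta_{k,0}$ for $0 \le k \le m-1$. Then the kernel $K(x) = \frac{1}{2\pi i}\sum_{j=1}^m \left( \frac{\alpha_j}{x - a_j} - \frac{\overline{\alpha_j}}{x - \overline{a_j}} \right)$ satisfies the moment vanishing conditions $\int_{\mathbb{R}} x^k K(x)\, dx = 0$ for $1 \le k \le m-1$ (where the integrals converge absolutely for $k \le m-2$ and as principal values for $k = m-1$). -/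

import Mathlib

open MeasureTheory Complex Filter Topology

/-- The (real part of the) rational kernel
`K(x) = (2πi)⁻¹ ∑ⱼ (αⱼ/(x - aⱼ) - conj αⱼ/(x - conj aⱼ))`. -/
noncomputable def ratKernel (m : ℕ) (a α : Fin m → ℂ) (x : ℝ) : ℝ :=
  ((2 * (Real.pi : ℂ) * Complex.I)⁻¹ *
    ∑ j, (α j / ((x : ℂ) - a j) -
      (starRingEnd ℂ) (α j) / ((x : ℂ) - (starRingEnd ℂ) (a j)))).re


lemma RK.sub_ne (x : ℝ) {a : ℂ} (ha : 0 < a.im) : (x:ℂ) - a ≠ 0 := by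
  intro h
  have h2 : ((x:ℂ) - a).im = 0 := by rw [h]; rfl
  simp [Complex.sub_im] at h2
  linarith

lemma RK.cont {a : ℂ} (ha : 0 < a.im) (β : ℂ) :
    Continuous (fun x : ℝ => (β / ((x:ℂ) - a)).im) :=
  Complex.continuous_im.comp <| continuous_const.div
    (Complex.continuous_ofReal.sub continuous_const) (fun x => RK.sub_ne x ha)

lemma RK.im_eq {a : ℂ} (β : ℂ) (x : ℝ) :
    (β / ((x:ℂ) - a)).im
      = (β.im * (x - a.re) + β.re * a.im) / ((x - a.re)^2 + a.im^2) := by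
  rw [Complex.div_im]
  simp [Complex.normSq_apply, Complex.sub_re, Complex.sub_im]
  ring

lemma RK.hasDeriv {p q : ℝ} (hq : 0 < q) (β : ℂ) (x : ℝ) :
    HasDerivAt (fun y : ℝ => β.im * Real.log ((y - p)^2 + q^2) / 2
        + β.re * Real.arctan ((y - p)/q))
      ((β.im * (x - p) + β.re * q) / ((x - p)^2 + q^2)) x := by
  have hD : 0 < (x - p)^2 + q^2 := by positivity
  have h1 : HasDerivAt (fun y : ℝ => (y - p)^2 + q^2) (2*(x-p)) x := by
    have := (((hasDerivAt_id x).sub_const p).pow 2).add_const (q^2)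
    refine this.congr_deriv ?_
    simp [mul_comm]
  have h2 := h1.log (ne_of_gt hD)
  have h3 : HasDerivAt (fun y : ℝ => (y - p)/q) (1/q) x := by
    simpa using ((hasDerivAt_id x).sub_const p).div_const q
  have h4 := h3.arctan
  have := ((h2.const_mul β.im).div_const 2).add (h4.const_mul β.re)
  refine this.congr_deriv ?_
  have hq' : q ≠ 0 := ne_of_gt hq
  field_simp
  ring

lemma RK.intervalIntegral_eq {a : ℂ} (ha : 0 < a.im) (β : ℂ) (r : ℝ) :
    ∫ x in (-r)..r, (β / ((x:ℂ) - a)).im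
      = (β.im * Real.log ((r - a.re)^2 + a.im^2) / 2
          + β.re * Real.arctan ((r - a.re)/a.im))
        - (β.im * Real.log ((-r - a.re)^2 + a.im^2) / 2
          + β.re * Real.arctan ((-r - a.re)/a.im)) := by
  set p := a.re
  set q := a.im
  have hcont : Continuous fun x : ℝ =>
      (β.im * (x - p) + β.re * q) / ((x - p)^2 + q^2) := by
    apply Continuous.div
    · exact (continuous_const.mul (continuous_id.sub continuous_const)).add continuous_const
    · exact ((continuous_id.sub continuous_const).pow 2).add continuous_const
    · intro x; positivity
  have key := intervalIntegral.integral_eq_sub_of_hasDerivAt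
    (f := fun y : ℝ => β.im * Real.log ((y - p)^2 + q^2) / 2
        + β.re * Real.arctan ((y - p)/q))
    (f' := fun x : ℝ => (β.im * (x - p) + β.re * q) / ((x - p)^2 + q^2))
    (a := -r) (b := r)
    (fun x _ => RK.hasDeriv ha β x) (hcont.intervalIntegrable _ _)
  rw [← key]
  apply intervalIntegral.integral_congr
  intro x _
  exact RK.im_eq β x

lemma RK.tendsto_interval {a : ℂ} (ha : 0 < a.im) (β : ℂ) :
    Tendsto (fun r : ℝ => ∫ x in (-r)..r, (β / ((x:ℂ) - a)).im) atTop
      (𝓝 (Real.pi * β.re)) := by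
  set p := a.re
  set q := a.im
  have hq : 0 < q := ha
  -- limits
  have hrat : Tendsto (fun r : ℝ => ((r - p)^2 + q^2) / ((r + p)^2 + q^2)) atTop (𝓝 1) := by
    have hz : Tendsto (fun r : ℝ => r⁻¹) atTop (𝓝 0) := tendsto_inv_atTop_zero
    have hnum : Tendsto (fun r : ℝ => (1 - p * r⁻¹)^2 + (q * r⁻¹)^2) atTop (𝓝 1) := by
      have := ((tendsto_const_nhds (x := (1:ℝ))).sub (hz.const_mul p)).pow 2 |>.add
        ((hz.const_mul q).pow 2)
      simpa using this
    have hden : Tendsto (fun r : ℝ => (1 + p * r⁻¹)^2 + (q * r⁻¹)^2) atTop (𝓝 1) := by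
      have := ((tendsto_const_nhds (x := (1:ℝ))).add (hz.const_mul p)).pow 2 |>.add
        ((hz.const_mul q).pow 2)
      simpa using this
    have := hnum.div hden one_ne_zero
    rw [show (1:ℝ)/1 = 1 by norm_num] at this
    apply this.congr'
    filter_upwards [eventually_gt_atTop (0:ℝ)] with r hr
    have hr' : r ≠ 0 := ne_of_gt hr
    simp only [Pi.div_apply]
    field_simp
  have hlog : Tendsto (fun r : ℝ =>
      Real.log ((r - p)^2 + q^2) - Real.log ((r + p)^2 + q^2)) atTop (𝓝 0) := by
    have hc : Tendsto Real.log (𝓝 (1:ℝ)) (𝓝 0) := by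
      simpa using (Real.continuousAt_log one_ne_zero).tendsto
    have := hc.comp hrat
    apply this.congr
    intro r
    have h1 : ((r - p)^2 + q^2) ≠ 0 := by positivity
    have h2 : ((r + p)^2 + q^2) ≠ 0 := by positivity
    simp [Function.comp, Real.log_div h1 h2]
  have harct1 : Tendsto (fun r : ℝ => Real.arctan ((r - p)/q)) atTop (𝓝 (Real.pi/2)) := by
    have hdiv : Tendsto (fun r : ℝ => (r - p)/q) atTop atTop :=
      (tendsto_atTop_add_const_right atTop (-p) tendsto_id).atTop_div_const hq
    exact (Real.tendsto_arctan_atTop.mono_right nhdsWithin_le_nhds).comp hdiv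
  have harct2 : Tendsto (fun r : ℝ => Real.arctan ((-r - p)/q)) atTop (𝓝 (-(Real.pi/2))) := by
    have hdiv : Tendsto (fun r : ℝ => (-r - p)/q) atTop atBot := by
      apply Tendsto.atBot_div_const hq
      exact tendsto_atBot_add_const_right atTop (-p) tendsto_neg_atTop_atBot
    exact (Real.tendsto_arctan_atBot.mono_right nhdsWithin_le_nhds).comp hdiv
  have hfinal := (hlog.const_mul (β.im/2)).add ((harct1.sub harct2).const_mul β.re)
  have : Tendsto (fun r : ℝ =>
      β.im/2 * (Real.log ((r - p)^2 + q^2) - Real.log ((r + p)^2 + q^2))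
        + β.re * (Real.arctan ((r - p)/q) - Real.arctan ((-r - p)/q))) atTop
      (𝓝 (Real.pi * β.re)) := by
    convert hfinal using 2
    ring
  apply this.congr
  intro r
  rw [RK.intervalIntegral_eq ha β r]
  have : (-r - p)^2 = (r + p)^2 := by ring
  rw [this]
  ring


lemma RK.sub_I_ne (x : ℝ) : (x:ℂ) - Complex.I ≠ 0 := by
  intro h
  have h2 : ((x:ℂ) - Complex.I).im = 0 := by rw [h]; rfl
  simp [Complex.sub_im] at h2

lemma RK.norm_sub_I_sq (x : ℝ) : ‖(x:ℂ) - Complex.I‖^2 = 1 + x^2 := by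
  rw [Complex.sq_norm]
  simp [Complex.normSq_apply, Complex.sub_re, Complex.sub_im]
  ring

lemma RK.integrable_g {a : ℂ} (ha : 0 < a.im) (c : ℂ) :
    Integrable (fun x : ℝ => c / (((x:ℂ) - a) * ((x:ℂ) - Complex.I))) := by
  set q := a.im with hqdef
  have hq : 0 < q := ha
  set c₀ : ℝ := 1 + ‖a - Complex.I‖ / q with hc₀def
  have hc₀ : 1 ≤ c₀ := by
    have h0 : (0:ℝ) ≤ ‖a - Complex.I‖ / q := by positivity
    rw [hc₀def]; linarith
  have hcont : Continuous (fun x : ℝ => c / (((x:ℂ) - a) * ((x:ℂ) - Complex.I))) := by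
    apply continuous_const.div
    · exact ((Complex.continuous_ofReal.sub continuous_const).mul
        (Complex.continuous_ofReal.sub continuous_const))
    · intro x
      exact mul_ne_zero (RK.sub_ne x ha) (RK.sub_I_ne x)
  apply Integrable.mono' (g := fun x : ℝ => (‖c‖ * c₀) * (1 + x^2)⁻¹)
    (integrable_inv_one_add_sq.const_mul _) hcont.aestronglyMeasurable
  filter_upwards with x
  set A := ‖(x:ℂ) - a‖ with hAdef
  set B := ‖(x:ℂ) - Complex.I‖ with hBdef
  have hA : q ≤ A := by
    have h1 : |((x:ℂ) - a).im| ≤ ‖(x:ℂ) - a‖ := Complex.abs_im_le_norm _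
    have h2 : ((x:ℂ) - a).im = -q := by simp [Complex.sub_im, hqdef]
    rw [h2] at h1
    rw [hAdef]
    calc q ≤ |(-q)| := by rw [abs_neg, abs_of_pos hq]
    _ ≤ _ := h1
  have hApos : 0 < A := lt_of_lt_of_le hq hA
  have hB0 : 0 ≤ B := norm_nonneg _
  have hBsq : B^2 = 1 + x^2 := RK.norm_sub_I_sq x
  have hBpos : 0 < B := by
    rcases hB0.lt_or_eq with h | h
    · exact h
    · exfalso; nlinarith
  have hBA : B ≤ c₀ * A := by
    have htri : B ≤ A + ‖a - Complex.I‖ := by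
      calc B = ‖((x:ℂ) - a) + (a - Complex.I)‖ := by rw [hBdef]; ring_nf
      _ ≤ A + ‖a - Complex.I‖ := norm_add_le _ _
    calc B ≤ A + ‖a - Complex.I‖ := htri
    _ ≤ A + (‖a - Complex.I‖/q) * A := by
        have h0 : (0:ℝ) ≤ ‖a - Complex.I‖/q := by positivity
        have h1 := mul_le_mul_of_nonneg_left hA h0
        have h2 : ‖a - Complex.I‖/q * q = ‖a - Complex.I‖ := by field_simp
        linarith
    _ = c₀ * A := by rw [hc₀def]; ring
  have hkey : 1 + x^2 ≤ c₀ * (A * B) := by nlinarith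
  have hnorm : ‖c / (((x:ℂ) - a) * ((x:ℂ) - Complex.I))‖ = ‖c‖ / (A * B) := by
    rw [norm_div, norm_mul]
  rw [hnorm]
  rw [div_le_iff₀ (by positivity)]
  have expand : ‖c‖ * c₀ * (1 + x^2)⁻¹ * (A*B) = ‖c‖ * (c₀ * (A*B)) * (1+x^2)⁻¹ := by ring
  rw [expand]
  have h1x : (0:ℝ) < 1 + x^2 := by positivity
  calc ‖c‖ = ‖c‖ * (1+x^2) * (1+x^2)⁻¹ := by field_simp
  _ ≤ ‖c‖ * (c₀ * (A*B)) * (1+x^2)⁻¹ := by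
      apply mul_le_mul_of_nonneg_right _ (by positivity)
      exact mul_le_mul_of_nonneg_left hkey (norm_nonneg c)

lemma RK.integrable_sum {m : ℕ} (a β : Fin m → ℂ) (ha : ∀ j, 0 < (a j).im)
    (hsum : ∑ j, β j = 0) :
    Integrable (fun x : ℝ => ∑ j, (β j / ((x:ℂ) - a j)).im) := by
  have hgi : Integrable (fun x : ℝ => ∑ j, (β j * (a j - Complex.I)) /
      (((x:ℂ) - a j) * ((x:ℂ) - Complex.I))) :=
    integrable_finset_sum _ (fun j _ => RK.integrable_g (ha j) _)
  apply hgi.im.congr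
  filter_upwards with x
  have hx : ∀ j : Fin m, (β j * (a j - Complex.I)) / (((x:ℂ) - a j) * ((x:ℂ) - Complex.I))
      = β j / ((x:ℂ) - a j) - β j / ((x:ℂ) - Complex.I) := by
    intro j
    have h1 := RK.sub_ne x (ha j)
    have h2 := RK.sub_I_ne x
    field_simp
    ring
  have hsum2 : ∑ j, (β j * (a j - Complex.I)) / (((x:ℂ) - a j) * ((x:ℂ) - Complex.I))
      = ∑ j, β j / ((x:ℂ) - a j) := by
    rw [Finset.sum_congr rfl (fun j _ => hx j), Finset.sum_sub_distrib, ← Finset.sum_div,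
      hsum]
    simp
  have h3 := congrArg Complex.im hsum2
  simpa [Complex.im_sum] using h3

lemma RK.tendsto_sum_interval {m : ℕ} (a β : Fin m → ℂ) (ha : ∀ j, 0 < (a j).im) :
    Tendsto (fun r : ℝ => ∫ x in (-r)..r, ∑ j, (β j / ((x:ℂ) - a j)).im) atTop
      (𝓝 (Real.pi * (∑ j, β j).re)) := by
  have heq : ∀ r : ℝ, ∫ x in (-r)..r, ∑ j, (β j / ((x:ℂ) - a j)).im
      = ∑ j, ∫ x in (-r)..r, (β j / ((x:ℂ) - a j)).im := fun r =>
    intervalIntegral.integral_finset_sum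
      (fun j _ => (RK.cont (ha j) (β j)).intervalIntegrable _ _)
  have hlim := tendsto_finset_sum (Finset.univ : Finset (Fin m))
    (fun j _ => RK.tendsto_interval (ha j) (β j))
  rw [funext heq]
  convert hlim using 2
  rw [Complex.re_sum, Finset.mul_sum]

lemma RK.integral_sum_zero {m : ℕ} (a β : Fin m → ℂ) (ha : ∀ j, 0 < (a j).im)
    (hsum : ∑ j, β j = 0) :
    ∫ x : ℝ, ∑ j, (β j / ((x:ℂ) - a j)).im = 0 := by
  have hi := RK.integrable_sum a β ha hsum
  have h1 := intervalIntegral_tendsto_integral hi tendsto_neg_atTop_atBot tendsto_id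
  have h2 := RK.tendsto_sum_interval a β ha
  rw [hsum] at h2
  simp only [Complex.zero_re, mul_zero] at h2
  exact tendsto_nhds_unique h1 h2

lemma RK.sub_ne' (x : ℝ) {a : ℂ} (ha : 0 < a.im) :
    (x:ℂ) - (starRingEnd ℂ) a ≠ 0 := by
  intro h
  have h2 : ((x:ℂ) - (starRingEnd ℂ) a).im = 0 := by rw [h]; rfl
  simp [Complex.sub_im] at h2
  linarith

lemma RK.key_identity {m : ℕ} (k : ℕ) (hk1 : 1 ≤ k) (hkm : k < m) (a α : Fin m → ℂ)
    (ha : ∀ j, 0 < (a j).im)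
    (hvand : ∀ n : ℕ, n < m → ∑ j, α j * a j ^ n = if n = 0 then 1 else 0) (x : ℝ) :
    x^k * ratKernel m a α x
      = Real.pi⁻¹ * ∑ j, ((α j * a j ^ k) / ((x:ℂ) - a j)).im := by
  have hπ : (Real.pi:ℂ) ≠ 0 := Complex.ofReal_ne_zero.mpr Real.pi_ne_zero
  -- per-term partial fraction
  have hgeom : ∀ (b : ℂ), (x:ℂ) - b ≠ 0 → ∀ (c : ℂ),
      (x:ℂ)^k * (c / ((x:ℂ) - b))
        = c * (∑ i ∈ Finset.range k, (x:ℂ)^i * b^(k-1-i)) + (c * b^k)/((x:ℂ) - b) := by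
    intro b hne c
    have hg := geom_sum₂_mul (x:ℂ) b k
    field_simp
    linear_combination (-c) * hg
  -- the Vandermonde collapse
  have hQ : (∑ j, α j * ∑ i ∈ Finset.range k, (x:ℂ)^i * a j^(k-1-i)) = (x:ℂ)^(k-1) := by
    have hswap : (∑ j, α j * ∑ i ∈ Finset.range k, (x:ℂ)^i * a j^(k-1-i))
        = ∑ i ∈ Finset.range k, (x:ℂ)^i * ∑ j, α j * a j^(k-1-i) := by
      simp_rw [Finset.mul_sum]
      rw [Finset.sum_comm]
      apply Finset.sum_congr rfl; intro i _
      apply Finset.sum_congr rfl; intro j _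
      ring
    rw [hswap]
    have hterm : ∀ i ∈ Finset.range k, (x:ℂ)^i * ∑ j, α j * a j^(k-1-i)
        = if i = k-1 then (x:ℂ)^(k-1) else 0 := by
      intro i hi
      have hi' : i < k := Finset.mem_range.mp hi
      have hlt : k - 1 - i < m := lt_of_le_of_lt (Nat.sub_le _ _)
        (lt_of_le_of_lt (Nat.sub_le _ _) hkm)
      rw [hvand _ hlt]
      by_cases hik : i = k - 1
      · subst hik
        simp [Nat.sub_self]
      · have h1 : i < k - 1 := lt_of_le_of_ne (Nat.le_sub_one_of_lt hi') hik
        have h2 : k - 1 - i ≠ 0 := Nat.sub_ne_zero_of_lt h1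
        simp [h2, hik]
    rw [Finset.sum_congr rfl hterm, Finset.sum_ite_eq' (Finset.range k) (k-1)]
    simp [Nat.sub_lt (lt_of_lt_of_le Nat.zero_lt_one hk1) Nat.zero_lt_one]
  -- conjugate collapse
  have hQc : (∑ j, (starRingEnd ℂ) (α j) *
      ∑ i ∈ Finset.range k, (x:ℂ)^i * ((starRingEnd ℂ) (a j))^(k-1-i)) = (x:ℂ)^(k-1) := by
    have hc : ∀ j : Fin m, (starRingEnd ℂ) (α j) *
        (∑ i ∈ Finset.range k, (x:ℂ)^i * ((starRingEnd ℂ) (a j))^(k-1-i))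
        = (starRingEnd ℂ) (α j * ∑ i ∈ Finset.range k, (x:ℂ)^i * (a j)^(k-1-i)) := by
      intro j
      rw [map_mul, map_sum]
      congr 1
      apply Finset.sum_congr rfl; intro i _
      rw [map_mul, map_pow, map_pow, Complex.conj_ofReal]
    rw [Finset.sum_congr rfl (fun j _ => hc j), ← map_sum, hQ]
    rw [← Complex.ofReal_pow, Complex.conj_ofReal]
  -- main sum identity
  have hS : (x:ℂ)^k * (∑ j, (α j / ((x:ℂ) - a j) -
        (starRingEnd ℂ) (α j) / ((x:ℂ) - (starRingEnd ℂ) (a j))))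
      = ∑ j, ((α j * a j^k) / ((x:ℂ) - a j)
          - (starRingEnd ℂ) (α j * a j^k) / ((x:ℂ) - (starRingEnd ℂ) (a j))) := by
    rw [Finset.mul_sum]
    have expand : ∀ j : Fin m, (x:ℂ)^k * (α j / ((x:ℂ) - a j)
          - (starRingEnd ℂ) (α j) / ((x:ℂ) - (starRingEnd ℂ) (a j)))
        = (α j * (∑ i ∈ Finset.range k, (x:ℂ)^i * (a j)^(k-1-i))
            - (starRingEnd ℂ) (α j) * (∑ i ∈ Finset.range k, (x:ℂ)^i * ((starRingEnd ℂ) (a j))^(k-1-i)))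
          + ((α j * a j^k) / ((x:ℂ) - a j)
            - (starRingEnd ℂ) (α j * a j^k) / ((x:ℂ) - (starRingEnd ℂ) (a j))) := by
      intro j
      have e1 := hgeom (a j) (RK.sub_ne x (ha j)) (α j)
      have e2 := hgeom ((starRingEnd ℂ) (a j)) (RK.sub_ne' x (ha j)) ((starRingEnd ℂ) (α j))
      rw [mul_sub, e1, e2, map_mul, map_pow]
      ring
    rw [Finset.sum_congr rfl (fun j _ => expand j), Finset.sum_add_distrib,
      Finset.sum_sub_distrib, hQ, hQc, sub_self, zero_add]
  -- put it together
  simp only [ratKernel]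
  set S := ∑ j, (α j / ((x : ℂ) - a j) -
      (starRingEnd ℂ) (α j) / ((x : ℂ) - (starRingEnd ℂ) (a j))) with hSdef
  have h1 : (x:ℝ) ^ k * ((2 * (Real.pi : ℂ) * Complex.I)⁻¹ * S).re
      = ((2 * (Real.pi : ℂ) * Complex.I)⁻¹ * ((x:ℂ)^k * S)).re := by
    rw [show (2 * (Real.pi : ℂ) * Complex.I)⁻¹ * ((x:ℂ)^k * S)
        = ((x^k:ℝ):ℂ) * ((2 * (Real.pi : ℂ) * Complex.I)⁻¹ * S) from by push_cast; ring]
    rw [Complex.re_ofReal_mul]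
  rw [h1, hS]
  -- now the conjugation structure
  have hw : ∀ j : Fin m, (starRingEnd ℂ) (α j * a j^k) / ((x:ℂ) - (starRingEnd ℂ) (a j))
      = (starRingEnd ℂ) ((α j * a j^k) / ((x:ℂ) - a j)) := by
    intro j
    rw [map_div₀, map_sub, Complex.conj_ofReal]
  have hsub : ∀ j : Fin m, (α j * a j^k) / ((x:ℂ) - a j)
        - (starRingEnd ℂ) (α j * a j^k) / ((x:ℂ) - (starRingEnd ℂ) (a j))
      = (2 * ((α j * a j^k) / ((x:ℂ) - a j)).im : ℝ) * Complex.I := by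
    intro j
    rw [hw j, Complex.sub_conj]
  rw [Finset.sum_congr rfl (fun j _ => hsub j)]
  rw [← Finset.sum_mul]
  rw [show (∑ j, ((2 * ((α j * a j^k) / ((x:ℂ) - a j)).im : ℝ) : ℂ))
      = ((∑ j, 2 * ((α j * a j^k) / ((x:ℂ) - a j)).im : ℝ) : ℂ) from by push_cast; ring]
  set t : ℝ := ∑ j, ((α j * a j^k) / ((x:ℂ) - a j)).im with htdef
  have h2 : ((2 * (Real.pi : ℂ) * Complex.I)⁻¹ *
      (((∑ j, 2 * ((α j * a j^k) / ((x:ℂ) - a j)).im : ℝ) : ℂ) * Complex.I))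
      = ((Real.pi⁻¹ * t : ℝ) : ℂ) := by
    have hsum2 : (∑ j, 2 * ((α j * a j^k) / ((x:ℂ) - a j)).im : ℝ) = 2 * t := by
      rw [htdef, Finset.mul_sum]
    rw [hsum2]
    push_cast
    field_simp [Complex.I_ne_zero]
  rw [h2, Complex.ofReal_re]

/-- Moment vanishing conditions for the `m`-th order rational kernel: if the `aⱼ` are
distinct points of the open upper half-plane and the `αⱼ` solve the transposed
Vandermonde system, then `∫ xᵏ K(x) dx = 0` for `1 ≤ k ≤ m - 1`; the integral
converges absolutely for `k ≤ m - 2` and as a principal value for `k = m - 1`. -/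
theorem ratKernel_moments_vanish
    (m : ℕ) (hm : 0 < m) (a α : Fin m → ℂ)
    (ha : ∀ j, 0 < (a j).im) (hinj : Function.Injective a)
    (hvand : ∀ k : ℕ, k < m → ∑ j, α j * a j ^ k = if k = 0 then 1 else 0) :
    (∀ k : ℕ, 1 ≤ k → k ≤ m - 2 →
        Integrable (fun x : ℝ => x ^ k * ratKernel m a α x) ∧
          ∫ x : ℝ, x ^ k * ratKernel m a α x = 0) ∧
      (2 ≤ m →
        Tendsto (fun r : ℝ => ∫ x in (-r)..r, x ^ (m - 1) * ratKernel m a α x)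
          atTop (𝓝 0)) := by
  have main : ∀ k : ℕ, 1 ≤ k → k < m →
      Integrable (fun x : ℝ => x ^ k * ratKernel m a α x) ∧
        (∫ x : ℝ, x ^ k * ratKernel m a α x = 0) ∧
        Tendsto (fun r : ℝ => ∫ x in (-r)..r, x ^ k * ratKernel m a α x) atTop (𝓝 0) := by
    intro k hk1 hkm
    set β : Fin m → ℂ := fun j => α j * a j ^ k with hβdef
    have hβ : ∑ j, β j = 0 := by
      show ∑ j, α j * a j ^ k = 0
      rw [hvand k hkm, if_neg (by omega)]
    have hkey : ∀ x : ℝ, x ^ k * ratKernel m a α x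
        = Real.pi⁻¹ * ∑ j, (β j / ((x:ℂ) - a j)).im :=
      RK.key_identity k hk1 hkm a α ha hvand
    have hint : Integrable (fun x : ℝ => x ^ k * ratKernel m a α x) := by
      have h := (RK.integrable_sum a β ha hβ).const_mul (Real.pi)⁻¹
      exact h.congr (by filter_upwards with x using (hkey x).symm)
    refine ⟨hint, ?_, ?_⟩
    · have h1 : ∫ x : ℝ, x ^ k * ratKernel m a α x
          = ∫ x : ℝ, Real.pi⁻¹ * ∑ j, (β j / ((x:ℂ) - a j)).im := by
        apply integral_congr_ae
        filter_upwards with x using hkey x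
      rw [h1, integral_const_mul, RK.integral_sum_zero a β ha hβ, mul_zero]
    · have h2 : ∀ r : ℝ, ∫ x in (-r)..r, x ^ k * ratKernel m a α x
          = Real.pi⁻¹ * ∫ x in (-r)..r, ∑ j, (β j / ((x:ℂ) - a j)).im := by
        intro r
        rw [← intervalIntegral.integral_const_mul]
        apply intervalIntegral.integral_congr
        intro x _
        exact hkey x
      rw [funext h2]
      have h3 := (RK.tendsto_sum_interval a β ha).const_mul (Real.pi)⁻¹
      rw [hβ] at h3
      simpa using h3
  constructor
  · intro k hk1 hk2
    have hkm : k < m := by omega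
    exact ⟨(main k hk1 hkm).1, (main k hk1 hkm).2.1⟩
  · intro hm2
    exact (main (m-1) (by omega) (by omega)).2.2
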